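/- In the setting of the Wick-A exponential, for η with 2‖η‖²_{L²} < R_A, the squared L²-norm of W_A(η) := e^{√A I(η)} / E[e^{√A I(η)}] equals L[A](−2‖η‖²₂) · (L[A](−‖η‖²₂/2))^{−2}. -/

import Mathlib

open MeasureTheory ProbabilityTheory Filter
open scoped ENNReal NNReal

private lemma exp_eq_tsum_real (x : ℝ) : Real.exp x = ∑' n : ℕ, x ^ n / n.factorial := by
  rw [Real.exp_eq_exp_ℝ, NormedSpace.exp_eq_tsum_div]

private lemma pow_mul_exp_le {τ t x : ℝ} (hτ : 0 < τ) (hτt : τ ≤ t) (hx : 0 ≤ x) (n : ℕ) :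
    x ^ n * Real.exp (-(t * x)) ≤ n.factorial / τ ^ n := by
  have hfact : (0:ℝ) < n.factorial := by positivity
  have h1 : (τ * x) ^ n / n.factorial ≤ Real.exp (τ * x) :=
    Real.pow_div_factorial_le_exp _ (mul_nonneg hτ.le hx) n
  have h2 : Real.exp (-(t * x)) ≤ Real.exp (-(τ * x)) := by
    apply Real.exp_le_exp.2; nlinarith
  have h3 : x ^ n * Real.exp (-(τ * x)) ≤ n.factorial / τ ^ n := by
    rw [div_le_iff₀ hfact] at h1
    have hxe : x ^ n * Real.exp (-(τ * x)) * τ ^ n ≤ (n.factorial : ℝ) := by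
      rw [Real.exp_neg]
      have hrw : x ^ n * (Real.exp (τ * x))⁻¹ * τ ^ n
          = (τ * x) ^ n / Real.exp (τ * x) := by
        rw [mul_pow]; field_simp
      rw [hrw, div_le_iff₀ (Real.exp_pos _)]
      calc (τ * x) ^ n ≤ Real.exp (τ * x) * n.factorial := h1
        _ = (n.factorial : ℝ) * Real.exp (τ * x) := mul_comm _ _
    rw [le_div_iff₀ (by positivity : (0:ℝ) < τ ^ n)]
    exact hxe
  calc x ^ n * Real.exp (-(t * x)) ≤ x ^ n * Real.exp (-(τ * x)) :=
        mul_le_mul_of_nonneg_left h2 (pow_nonneg hx n)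
    _ ≤ _ := h3

private lemma integrable_and_integral_eq_of_lintegral {Ω : Type*} [MeasurableSpace Ω]
    {P : Measure Ω} {f : Ω → ℝ} (hmeas : Measurable f) (hnonneg : ∀ ω, 0 ≤ f ω)
    {S : ℝ} (hS : 0 ≤ S)
    (h : ∫⁻ ω, ENNReal.ofReal (f ω) ∂P = ENNReal.ofReal S) :
    Integrable f P ∧ ∫ ω, f ω ∂P = S := by
  have hint : Integrable f P := by
    refine ⟨hmeas.aestronglyMeasurable, ?_⟩
    rw [hasFiniteIntegral_iff_ofReal (ae_of_all _ hnonneg), h]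
    exact ENNReal.ofReal_lt_top
  refine ⟨hint, ?_⟩
  rw [integral_eq_lintegral_of_nonneg_ae (ae_of_all _ hnonneg) hmeas.aestronglyMeasurable, h,
    ENNReal.toReal_ofReal hS]

private lemma laplace_extension {Ω : Type*} [MeasurableSpace Ω] (P : Measure Ω)
    [IsProbabilityMeasure P]
    (A : Ω → ℝ) (hA : ∀ ω, 0 < A ω) (hAmeas : Measurable A)
    (R : ℝ) (L : ℂ → ℂ)
    (hL : DifferentiableOn ℂ L (Metric.ball (0:ℂ) R))
    (hLlaplace : ∀ t : ℝ, 0 ≤ t → t < R → L t = ∫ ω, Complex.exp (-(t * A ω)) ∂P)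
    (s : ℝ) (hs0 : 0 ≤ s) (hsR : s < R) :
    Integrable (fun ω => Real.exp (s * A ω)) P ∧
      L ((-s : ℝ) : ℂ) = ((∫ ω, Real.exp (s * A ω) ∂P : ℝ) : ℂ) := by
  have hR : 0 < R := lt_of_le_of_lt hs0 hsR
  -- real version of the Laplace transform hypothesis
  have hLreal : ∀ t : ℝ, 0 ≤ t → t < R →
      L t = ((∫ ω, Real.exp (-(t * A ω)) ∂P : ℝ) : ℂ) := by
    intro t ht htR
    rw [hLlaplace t ht htR]
    have hfe : (fun ω => Complex.exp (-((t:ℂ) * (A ω : ℂ))))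
        = fun ω => ((Real.exp (-(t * A ω)) : ℝ) : ℂ) := by
      funext ω
      rw [Complex.ofReal_exp]
      norm_cast
    rw [hfe]
    exact integral_ofReal
  set t0 : ℝ := (R - s) / 3 with ht0_def
  have ht0 : 0 < t0 := by rw [ht0_def]; linarith
  set R2 : ℝ := (R + s) / 2 with hR2_def
  have hst0R2 : s + t0 < R2 := by rw [ht0_def, hR2_def]; linarith
  have hR2R : R2 + t0 < R := by rw [ht0_def, hR2_def]; linarith
  have hR2pos : 0 < R2 := by rw [hR2_def]; linarith
  -- the coefficient integrands
  set g : ℕ → Ω → ℝ := fun n ω => A ω ^ n * Real.exp (-(t0 * A ω)) with hg_def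
  have hg_meas : ∀ n, Measurable (g n) := fun n =>
    (hAmeas.pow_const n).mul (Real.measurable_exp.comp (measurable_const.mul hAmeas).neg)
  have hg_nonneg : ∀ n ω, 0 ≤ g n ω := fun n ω =>
    mul_nonneg (pow_nonneg (hA ω).le _) (Real.exp_pos _).le
  have hg_le : ∀ τ, 0 < τ → τ ≤ t0 → ∀ n ω, g n ω ≤ n.factorial / τ ^ n :=
    fun τ hτ hτt n ω => pow_mul_exp_le hτ hτt (hA ω).le n
  have hg_int : ∀ n, Integrable (g n) P := by
    intro n
    refine (integrable_const ((n.factorial : ℝ) / t0 ^ n)).mono'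
      (hg_meas n).aestronglyMeasurable (ae_of_all _ fun ω => ?_)
    rw [Real.norm_of_nonneg (hg_nonneg n ω)]
    exact hg_le t0 ht0 le_rfl n ω
  set b : ℕ → ℝ := fun n => (∫ ω, g n ω ∂P) / n.factorial with hb_def
  have hb_nonneg : ∀ n, 0 ≤ b n := fun n =>
    div_nonneg (integral_nonneg fun ω => hg_nonneg n ω) (Nat.cast_nonneg _)
  have hb_bound : ∀ τ, 0 < τ → τ ≤ t0 → ∀ n, b n ≤ (1/τ) ^ n := by
    intro τ hτ hτt n
    have h1 : ∫ ω, g n ω ∂P ≤ (n.factorial : ℝ) / τ ^ n := by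
      calc ∫ ω, g n ω ∂P ≤ ∫ _ω, ((n.factorial : ℝ) / τ ^ n) ∂P :=
            integral_mono (hg_int n) (integrable_const _) (fun ω => hg_le τ hτ hτt n ω)
        _ = (n.factorial : ℝ) / τ ^ n := by simp
    simp only [hb_def]
    rw [div_le_iff₀ (show (0:ℝ) < (n.factorial : ℝ) by positivity)]
    calc ∫ ω, g n ω ∂P ≤ (n.factorial : ℝ) / τ ^ n := h1
      _ = (1/τ) ^ n * n.factorial := by rw [div_pow, one_pow]; ring
  -- summability of the series for |u| < t0
  have hsummable : ∀ u : ℝ, |u| < t0 → Summable (fun n => b n * |u| ^ n) := by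
    intro u hu
    set τ : ℝ := (|u| + t0)/2 with hτ_def
    have hτ0 : 0 < τ := by rw [hτ_def]; positivity
    have huτ : |u| < τ := by rw [hτ_def]; linarith
    have hτt0 : τ ≤ t0 := by rw [hτ_def]; linarith
    refine Summable.of_nonneg_of_le
      (fun n => mul_nonneg (hb_nonneg n) (pow_nonneg (abs_nonneg u) n)) (fun n => ?_)
      (summable_geometric_of_lt_one (by positivity) ((div_lt_one hτ0).2 huτ))
    calc b n * |u| ^ n ≤ (1/τ) ^ n * |u| ^ n :=
          mul_le_mul_of_nonneg_right (hb_bound τ hτ0 hτt0 n) (pow_nonneg (abs_nonneg u) n)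
      _ = (|u|/τ) ^ n := by rw [← mul_pow]; congr 1; ring
  -- value of each coefficient integral
  have hint_n : ∀ (u : ℝ) (n : ℕ), ∫ ω, u ^ n / n.factorial * g n ω ∂P = b n * u ^ n := by
    intro u n
    rw [integral_const_mul]
    simp only [hb_def]
    field_simp
  -- the series-integral swap for |u| < t0
  have hswap : ∀ u : ℝ, |u| < t0 →
      (∫ ω, Real.exp (u * A ω) * Real.exp (-(t0 * A ω)) ∂P) = ∑' n, b n * u ^ n := by
    intro u hu
    have habs : ∀ (n : ℕ) ω, ‖u ^ n / n.factorial * g n ω‖ = |u| ^ n / n.factorial * g n ω := by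
      intro n ω
      rw [Real.norm_eq_abs, abs_mul, abs_div, abs_pow, abs_of_nonneg (hg_nonneg n ω),
        Nat.abs_cast]
    have hcond : (∑' n : ℕ, ∫⁻ ω, ‖u ^ n / n.factorial * g n ω‖₊ ∂P) ≠ ⊤ := by
      have heq : ∀ n : ℕ, ∫⁻ ω, ‖u ^ n / n.factorial * g n ω‖₊ ∂P
          = ENNReal.ofReal (b n * |u| ^ n) := by
        intro n
        have hi : Integrable (fun ω => u ^ n / n.factorial * g n ω) P := (hg_int n).const_mul _
        refine Eq.trans (ofReal_integral_norm_eq_lintegral_enorm hi).symm ?_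
        congr 1
        calc ∫ ω, ‖u ^ n / n.factorial * g n ω‖ ∂P
            = ∫ ω, |u| ^ n / n.factorial * g n ω ∂P :=
              integral_congr_ae (ae_of_all _ fun ω => habs n ω)
          _ = b n * |u| ^ n := hint_n |u| n
      rw [tsum_congr heq, ← ENNReal.ofReal_tsum_of_nonneg
        (fun n => mul_nonneg (hb_nonneg n) (pow_nonneg (abs_nonneg u) n)) (hsummable u hu)]
      exact ENNReal.ofReal_ne_top
    have hmeasn : ∀ n : ℕ, AEStronglyMeasurable (fun ω => u ^ n / n.factorial * g n ω) P :=
      fun n => ((hg_meas n).const_mul _).aestronglyMeasurable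
    have hswap0 := integral_tsum hmeasn hcond
    have hpt : ∀ ω, (∑' n : ℕ, u ^ n / n.factorial * g n ω)
        = Real.exp (u * A ω) * Real.exp (-(t0 * A ω)) := by
      intro ω
      have h1 : (fun n : ℕ => u ^ n / n.factorial * g n ω)
          = fun n : ℕ => (u * A ω) ^ n / n.factorial * Real.exp (-(t0 * A ω)) := by
        funext n
        simp only [hg_def]
        rw [mul_pow]
        ring
      rw [h1, tsum_mul_right, ← exp_eq_tsum_real]
    calc (∫ ω, Real.exp (u * A ω) * Real.exp (-(t0 * A ω)) ∂P)
        = ∫ ω, ∑' n : ℕ, u ^ n / n.factorial * g n ω ∂P :=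
          integral_congr_ae (ae_of_all _ fun ω => (hpt ω).symm)
      _ = ∑' n : ℕ, ∫ ω, u ^ n / n.factorial * g n ω ∂P := hswap0
      _ = ∑' n : ℕ, b n * u ^ n := tsum_congr fun n => hint_n u n
  -- the formal power series
  set cc : ℕ → ℂ := fun n => (((-1:ℝ) ^ n * b n : ℝ) : ℂ) with hcc_def
  set p : FormalMultilinearSeries ℂ ℂ ℂ := FormalMultilinearSeries.ofScalars ℂ cc with hp_def
  have hp_norm : ∀ n, ‖p n‖ = b n := by
    intro n
    rw [hp_def, FormalMultilinearSeries.ofScalars_norm]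
    simp only [hcc_def]
    rw [Complex.norm_real, Real.norm_eq_abs, abs_mul, abs_pow, abs_neg, abs_one, one_pow,
      one_mul, abs_of_nonneg (hb_nonneg n)]
  have hp_apply : ∀ (n : ℕ) (y : ℂ), (p n fun _ => y) = cc n * y ^ n := by
    intro n y
    rw [hp_def, FormalMultilinearSeries.ofScalars_apply_eq, smul_eq_mul]
  have hp_radius : ENNReal.ofReal t0 ≤ p.radius := by
    refine ENNReal.le_of_forall_nnreal_lt (fun r hr => ?_)
    have hrt0 : (r : ℝ) < t0 := by
      have := (ENNReal.lt_ofReal_iff_toReal_lt (by simp)).1 hr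
      simpa using this
    refine p.le_radius_of_bound 1 (fun n => ?_)
    rw [hp_norm]
    set τ : ℝ := ((r:ℝ) + t0)/2 with hτ_def
    have hτ0 : 0 < τ := by rw [hτ_def]; positivity
    have hrτ : (r:ℝ) ≤ τ := by rw [hτ_def]; linarith
    have hτt0 : τ ≤ t0 := by rw [hτ_def]; linarith
    calc b n * (r:ℝ) ^ n ≤ (1/τ) ^ n * τ ^ n := by
          refine mul_le_mul (hb_bound τ hτ0 hτt0 n)
            (pow_le_pow_left₀ r.coe_nonneg hrτ n) (pow_nonneg r.coe_nonneg n)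
            (pow_nonneg (by positivity) n)
      _ = 1 := by rw [← mul_pow, one_div, inv_mul_cancel₀ hτ0.ne', one_pow]
  have hpos_rad : (0:ℝ≥0∞) < ENNReal.ofReal t0 := by simp [ht0]
  have hps : HasFPowerSeriesOnBall p.sum p 0 (ENNReal.ofReal t0) :=
    (p.hasFPowerSeriesOnBall (lt_of_lt_of_le hpos_rad hp_radius)).mono hpos_rad hp_radius
  have hg0 : HasFPowerSeriesOnBall (fun z => p.sum (z - (t0:ℂ))) p ((t0:ℂ)) (ENNReal.ofReal t0) := by
    have := hps.comp_sub (t0:ℂ)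
    rwa [zero_add] at this
  -- evaluation of p.sum at real points
  have hsum_eval : ∀ x : ℝ, p.sum ((x:ℝ):ℂ) = ((∑' n, b n * (-x) ^ n : ℝ) : ℂ) := by
    intro x
    rw [FormalMultilinearSeries.sum, Complex.ofReal_tsum]
    refine tsum_congr fun n => ?_
    rw [hp_apply]
    simp only [hcc_def]
    push_cast
    ring
  -- the identity theorem setup
  set r1 : ℝ := min t0 (R - t0) with hr1_def
  have hr1 : 0 < r1 := lt_min ht0 (by rw [ht0_def]; linarith)
  have hr1t0 : r1 ≤ t0 := min_le_left _ _
  have hr1Rt0 : r1 ≤ R - t0 := min_le_right _ _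
  set U : Set ℂ := Metric.ball ((t0:ℝ):ℂ) r1 with hU_def
  have ht0U : ((t0:ℝ):ℂ) ∈ U := Metric.mem_ball_self hr1
  have hGU : AnalyticOnNhd ℂ (fun z => p.sum (z - (t0:ℂ))) U := by
    intro z hz
    refine hg0.analyticAt_of_mem ?_
    rw [EMetric.mem_ball, edist_lt_ofReal]
    exact lt_of_lt_of_le (Metric.mem_ball.1 hz) hr1t0
  have hdist_t0 : dist ((t0:ℝ):ℂ) 0 = t0 := by
    rw [Complex.dist_eq, sub_zero, Complex.norm_real, Real.norm_eq_abs, abs_of_pos ht0]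
  have hUsub : U ⊆ Metric.ball (0:ℂ) R := by
    intro z hz
    rw [Metric.mem_ball] at hz ⊢
    calc dist z 0 ≤ dist z ((t0:ℝ):ℂ) + dist ((t0:ℝ):ℂ) 0 := dist_triangle _ _ _
      _ < r1 + t0 := by rw [hdist_t0]; linarith
      _ ≤ R := by linarith
  have hLU : AnalyticOnNhd ℂ L U := fun z hz =>
    (hL.analyticOnNhd Metric.isOpen_ball) z (hUsub hz)
  -- frequently equal near t0
  have hfreq : ∃ᶠ z in nhdsWithin ((t0:ℝ):ℂ) {((t0:ℝ):ℂ)}ᶜ,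
      (fun z => p.sum (z - (t0:ℂ))) z = L z := by
    have htendR : Tendsto (fun k : ℕ => (t0 + r1/2 * (1/(k+1)) : ℝ)) atTop (nhds t0) := by
      have h0 : Tendsto (fun k : ℕ => (1/(k+1) : ℝ)) atTop (nhds 0) :=
        tendsto_one_div_add_atTop_nhds_zero_nat
      have := (h0.const_mul (r1/2)).const_add t0
      simpa using this
    have htend : Tendsto (fun k : ℕ => ((t0 + r1/2 * (1/(k+1)) : ℝ) : ℂ)) atTop
        (nhdsWithin ((t0:ℝ):ℂ) {((t0:ℝ):ℂ)}ᶜ) := by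
      rw [tendsto_nhdsWithin_iff]
      constructor
      · exact (Complex.continuous_ofReal.tendsto t0).comp htendR
      · refine Eventually.of_forall fun k => ?_
        simp only [Set.mem_compl_iff, Set.mem_singleton_iff]
        intro h
        have h' : t0 + r1/2 * (1/(k+1)) = t0 := by exact_mod_cast h
        have hk : (0:ℝ) < 1/((k:ℝ)+1) := by positivity
        nlinarith
    refine htend.frequently (Frequently.of_forall fun k => ?_)
    set δ : ℝ := r1/2 * (1/(k+1)) with hδ_def
    have hk1 : (0:ℝ) < 1/((k:ℝ)+1) := by positivity
    have hk2 : (1:ℝ)/((k:ℝ)+1) ≤ 1 := by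
      rw [div_le_one (by positivity)]; linarith
    have hδ0 : 0 < δ := by rw [hδ_def]; positivity
    have hδr1 : δ < r1 := by
      rw [hδ_def]
      calc r1/2 * (1/((k:ℝ)+1)) ≤ r1/2 * 1 := by
            refine mul_le_mul_of_nonneg_left hk2 (by linarith)
        _ < r1 := by linarith
    have hδt0 : δ < t0 := lt_of_lt_of_le hδr1 hr1t0
    have hcast : ((t0 + δ : ℝ) : ℂ) - ((t0:ℝ):ℂ) = ((δ:ℝ):ℂ) := by push_cast; ring
    show p.sum (((t0 + δ : ℝ) : ℂ) - (t0:ℂ)) = L ((t0 + δ : ℝ) : ℂ)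
    rw [hcast, hsum_eval δ, hLreal (t0+δ) (by linarith) (by linarith)]
    norm_cast
    rw [← hswap (-δ) (by rwa [abs_neg, abs_of_pos hδ0])]
    refine integral_congr_ae (ae_of_all _ fun ω => ?_)
    show Real.exp (-δ * A ω) * Real.exp (-(t0 * A ω)) = Real.exp (-((t0 + δ) * A ω))
    rw [← Real.exp_add]
    congr 1
    ring
  have heqOn : Set.EqOn (fun z => p.sum (z - (t0:ℂ))) L U :=
    hGU.eqOn_of_preconnected_of_frequently_eq hLU (convex_ball _ _).isPreconnected ht0U hfreq
  -- uniqueness of power series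
  have hGat : HasFPowerSeriesAt (fun z => p.sum (z - (t0:ℂ))) p ((t0:ℝ):ℂ) :=
    hg0.hasFPowerSeriesAt
  have hLat : HasFPowerSeriesAt L p ((t0:ℝ):ℂ) :=
    hGat.congr (Filter.eventuallyEq_of_mem (Metric.isOpen_ball.mem_nhds ht0U) heqOn)
  set R2' : ℝ≥0 := R2.toNNReal with hR2'_def
  have hR2'_coe : (R2' : ℝ) = R2 := Real.coe_toNNReal _ hR2pos.le
  have hR2'pos : (0:ℝ≥0) < R2' := by
    rw [← NNReal.coe_lt_coe, hR2'_coe]; exact hR2pos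
  have hdiff : DifferentiableOn ℂ L (Metric.closedBall ((t0:ℝ):ℂ) R2') := by
    refine hL.mono ?_
    intro z hz
    rw [Metric.mem_closedBall] at hz
    rw [Metric.mem_ball]
    calc dist z 0 ≤ dist z ((t0:ℝ):ℂ) + dist ((t0:ℝ):ℂ) 0 := dist_triangle _ _ _
      _ ≤ R2' + t0 := by rw [hdist_t0]; linarith
      _ < R := by rw [hR2'_coe]; linarith
  have hq := hdiff.hasFPowerSeriesOnBall hR2'pos
  have hpq : cauchyPowerSeries L ((t0:ℝ):ℂ) R2' = p :=
    hq.hasFPowerSeriesAt.eq_formalMultilinearSeries hLat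
  rw [hpq] at hq
  -- evaluation at -s
  have hy : ((-(s+t0) : ℝ) : ℂ) ∈ EMetric.ball (0:ℂ) R2' := by
    rw [EMetric.ball, Metric.mem_eball, edist_dist, ← ENNReal.ofReal_coe_nnreal,
      ENNReal.ofReal_lt_ofReal_iff (by positivity)]
    rw [Complex.dist_eq, sub_zero, Complex.norm_real, Real.norm_eq_abs, hR2'_coe, abs_of_nonpos (by linarith)]
    linarith
  have hhs := hq.hasSum hy
  have harg : ((t0:ℝ):ℂ) + ((-(s+t0):ℝ):ℂ) = ((-s : ℝ):ℂ) := by push_cast; ring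
  rw [harg] at hhs
  have hterm : ∀ n : ℕ, (p n fun _ => ((-(s+t0):ℝ):ℂ)) = (((b n * (s+t0)^n : ℝ)):ℂ) := by
    intro n
    have hreal : ((-1:ℝ)) ^ n * b n * (-(s+t0)) ^ n = b n * (s+t0) ^ n := by
      have hnp : (-(s+t0):ℝ) ^ n = (-1) ^ n * (s+t0) ^ n := by
        rw [← neg_one_mul, mul_pow]
      rw [hnp]
      rw [show ((-1:ℝ)) ^ n * b n * ((-1) ^ n * (s+t0) ^ n)
          = ((-1) * (-1)) ^ n * (b n * (s+t0) ^ n) by rw [mul_pow]; ring]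
      norm_num
    rw [hp_apply]
    simp only [hcc_def]
    rw [← hreal]
    push_cast
    ring
  simp only [hterm] at hhs
  -- extract real sum
  have hre := hhs.mapL Complex.reCLM
  have him := hhs.mapL Complex.imCLM
  simp only [Complex.reCLM_apply, Complex.ofReal_re] at hre
  simp only [Complex.imCLM_apply, Complex.ofReal_im] at him
  have him0 : (L ((-s:ℝ):ℂ)).im = 0 := (him.unique hasSum_zero)
  set S : ℝ := (L ((-s:ℝ):ℂ)).re with hS_def
  have hSsum : HasSum (fun n => b n * (s+t0)^n) S := hre
  have hS_nonneg : 0 ≤ S := by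
    rw [← hSsum.tsum_eq]
    exact tsum_nonneg fun n => mul_nonneg (hb_nonneg n) (pow_nonneg (by linarith) n)
  have hLval : L ((-s:ℝ):ℂ) = ((S : ℝ) : ℂ) := by
    refine Complex.ext ?_ ?_
    · rw [Complex.ofReal_re]
    · rw [Complex.ofReal_im]
      exact him0
  -- the lintegral computation
  have hst0_nonneg : (0:ℝ) ≤ s + t0 := by linarith
  have hpt2 : ∀ ω, ENNReal.ofReal (Real.exp (s * A ω))
      = ∑' n : ℕ, ENNReal.ofReal ((s+t0)^n / n.factorial * g n ω) := by
    intro ω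
    have h1 : (fun n : ℕ => (s+t0)^n / n.factorial * g n ω)
        = fun n : ℕ => ((s+t0) * A ω) ^ n / n.factorial * Real.exp (-(t0 * A ω)) := by
      funext n
      simp only [hg_def]
      rw [mul_pow]
      ring
    have hsum_pt : (∑' n : ℕ, (s+t0)^n / n.factorial * g n ω) = Real.exp (s * A ω) := by
      rw [h1, tsum_mul_right, ← exp_eq_tsum_real, ← Real.exp_add]
      congr 1
      ring
    have hsummable_pt : Summable (fun n : ℕ => (s+t0)^n / n.factorial * g n ω) := by
      rw [h1]
      exact (Real.summable_pow_div_factorial _).mul_right _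
    rw [← hsum_pt, ENNReal.ofReal_tsum_of_nonneg
      (fun n => mul_nonneg (div_nonneg (pow_nonneg hst0_nonneg n) (Nat.cast_nonneg _))
        (hg_nonneg n ω)) hsummable_pt]
  have hmain : ∫⁻ ω, ENNReal.ofReal (Real.exp (s * A ω)) ∂P = ENNReal.ofReal S := by
    calc ∫⁻ ω, ENNReal.ofReal (Real.exp (s * A ω)) ∂P
        = ∫⁻ ω, ∑' n : ℕ, ENNReal.ofReal ((s+t0)^n / n.factorial * g n ω) ∂P :=
          lintegral_congr hpt2
      _ = ∑' n : ℕ, ∫⁻ ω, ENNReal.ofReal ((s+t0)^n / n.factorial * g n ω) ∂P :=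
          lintegral_tsum fun n =>
            (((hg_meas n).const_mul _).ennreal_ofReal).aemeasurable
      _ = ∑' n : ℕ, ENNReal.ofReal (b n * (s+t0)^n) := by
          refine tsum_congr fun n => ?_
          rw [← ofReal_integral_eq_lintegral_ofReal ((hg_int n).const_mul _)
            (ae_of_all _ fun ω => mul_nonneg
              (div_nonneg (pow_nonneg hst0_nonneg n) (Nat.cast_nonneg _)) (hg_nonneg n ω))]
          congr 1
          exact hint_n (s+t0) n
      _ = ENNReal.ofReal S := by
          rw [← ENNReal.ofReal_tsum_of_nonneg
            (fun n => mul_nonneg (hb_nonneg n) (pow_nonneg hst0_nonneg n)) hSsum.summable,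
            hSsum.tsum_eq]
  have hmeas_exp : Measurable fun ω => Real.exp (s * A ω) :=
    Real.measurable_exp.comp (measurable_const.mul hAmeas)
  obtain ⟨hint, hval⟩ := integrable_and_integral_eq_of_lintegral hmeas_exp
    (fun ω => (Real.exp_pos _).le) hS_nonneg hmain
  refine ⟨hint, ?_⟩
  rw [hval, hLval]

private lemma integrable_exp_quad {b : ℝ} (hb : 0 < b) (c : ℝ) :
    Integrable (fun x : ℝ => Real.exp (-b * x ^ 2 + c * x)) := by
  have h1 : Integrable (fun x : ℝ =>
      Real.exp (-b * (x - c/(2*b)) ^ 2) * Real.exp (c^2/(4*b))) :=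
    ((integrable_exp_neg_mul_sq hb).comp_sub_right (c/(2*b))).mul_const _
  refine h1.congr (ae_of_all _ fun x => ?_)
  show Real.exp (-b * (x - c/(2*b)) ^ 2) * Real.exp (c^2/(4*b)) = Real.exp (-b * x ^ 2 + c * x)
  rw [← Real.exp_add]
  congr 1
  field_simp
  ring

private lemma gaussian_mgf_integrable (v : NNReal) (θ : ℝ) :
    Integrable (fun x => Real.exp (θ * x)) (gaussianReal 0 v) := by
  by_cases hv : v = 0
  · subst hv
    rw [gaussianReal_zero_var]
    constructor
    · exact (by fun_prop : Measurable fun x : ℝ => Real.exp (θ * x)).aestronglyMeasurable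
    · have hmE : Measurable fun x : ℝ => ENNReal.ofReal (Real.exp (θ * x)) := by fun_prop
      rw [hasFiniteIntegral_iff_ofReal (ae_of_all _ fun x => (Real.exp_pos _).le),
        lintegral_dirac' _ hmE]
      exact ENNReal.ofReal_lt_top
  · rw [gaussianReal_of_var_ne_zero 0 hv]
    have hv' : (0:ℝ) < v := by positivity
    have hb : (0:ℝ) < (2*(v:ℝ))⁻¹ := by positivity
    rw [gaussianPDF_def]
    rw [integrable_withDensity_iff (measurable_gaussianPDFReal 0 v).ennreal_ofReal
      (ae_of_all _ fun x => ENNReal.ofReal_lt_top)]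
    have heq : ∀ x : ℝ, Real.exp (θ * x) * (ENNReal.ofReal (gaussianPDFReal 0 v x)).toReal
        = (Real.sqrt (2 * Real.pi * v))⁻¹ * Real.exp (-(2*(v:ℝ))⁻¹ * x^2 + θ * x) := by
      intro x
      rw [ENNReal.toReal_ofReal (gaussianPDFReal_nonneg 0 v x), gaussianPDFReal_def]
      simp only
      rw [mul_comm (Real.exp (θ*x)), mul_assoc, ← Real.exp_add]
      congr 2
      field_simp
      ring
    refine (((integrable_exp_quad hb θ).const_mul
      ((Real.sqrt (2 * Real.pi * v))⁻¹)).congr (ae_of_all _ fun x => ?_))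
    show (Real.sqrt (2 * Real.pi * v))⁻¹ * Real.exp (-(2*(v:ℝ))⁻¹ * x^2 + θ * x)
      = Real.exp (θ * x) * (ENNReal.ofReal (gaussianPDFReal 0 v x)).toReal
    rw [heq x]

private lemma gaussian_mgf_eq (v : NNReal) (θ : ℝ) :
    ∫ x, Real.exp (θ * x) ∂(gaussianReal 0 v) = Real.exp (θ ^ 2 * v / 2) := by
  by_cases hv : v = 0
  · subst hv
    rw [gaussianReal_zero_var, integral_dirac]
    norm_num
  · rw [gaussianReal_of_var_ne_zero 0 hv]
    have hv' : (0:ℝ) < v := by positivity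
    have hb : (0:ℝ) < (2*(v:ℝ))⁻¹ := by positivity
    have hπ : (0:ℝ) < 2 * Real.pi * v := by positivity
    rw [gaussianPDF_def]
    have hpdf : (fun x => ENNReal.ofReal (gaussianPDFReal 0 v x))
        = fun x => ((Real.toNNReal (gaussianPDFReal 0 v x) : ℝ≥0) : ℝ≥0∞) := rfl
    rw [hpdf, integral_withDensity_eq_integral_smul
      ((measurable_gaussianPDFReal 0 v).real_toNNReal)]
    have heq : ∀ x : ℝ, (Real.toNNReal (gaussianPDFReal 0 v x) : ℝ≥0) • Real.exp (θ * x)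
        = (Real.sqrt (2 * Real.pi * v))⁻¹ * Real.exp (-(2*(v:ℝ))⁻¹ * x^2 + θ * x) := by
      intro x
      rw [NNReal.smul_def, smul_eq_mul, Real.coe_toNNReal _ (gaussianPDFReal_nonneg 0 v x),
        gaussianPDFReal_def]
      simp only
      rw [mul_assoc, ← Real.exp_add]
      congr 2
      field_simp
      ring
    rw [integral_congr_ae (ae_of_all _ fun x => heq x), integral_const_mul]
    have hkey : ∫ x : ℝ, Real.exp (-(2*(v:ℝ))⁻¹ * x ^ 2 + θ * x)
        = Real.sqrt (Real.pi / (2*(v:ℝ))⁻¹) * Real.exp (θ^2 / (4 * (2*(v:ℝ))⁻¹)) := by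
      have hsq : ∀ x : ℝ, Real.exp (-(2*(v:ℝ))⁻¹ * x ^ 2 + θ * x)
          = Real.exp (-(2*(v:ℝ))⁻¹ * (x - θ / (2 * (2*(v:ℝ))⁻¹)) ^ 2)
            * Real.exp (θ ^ 2 / (4 * (2*(v:ℝ))⁻¹)) := by
        intro x
        rw [← Real.exp_add]
        congr 1
        field_simp
        ring
      rw [integral_congr_ae (ae_of_all _ fun x => hsq x), integral_mul_const,
        integral_sub_right_eq_self (fun x => Real.exp (-(2*(v:ℝ))⁻¹ * x ^ 2))
          (θ / (2 * (2*(v:ℝ))⁻¹)),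
        integral_gaussian]
    rw [hkey]
    have h1 : Real.pi / (2*(v:ℝ))⁻¹ = 2 * Real.pi * v := by field_simp
    have h2 : θ^2 / (4 * (2*(v:ℝ))⁻¹) = θ^2 * v / 2 := by field_simp; ring
    rw [h1, h2, ← mul_assoc, inv_mul_cancel₀ (ne_of_gt (Real.sqrt_pos.2 hπ)), one_mul]

private lemma exp_sqrt_integral {Ω : Type*} [MeasurableSpace Ω] (P : Measure Ω)
    [IsProbabilityMeasure P] (A G : Ω → ℝ) (hA : ∀ ω, 0 < A ω)
    (hAmeas : Measurable A) (hGmeas : Measurable G) (v : NNReal)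
    (hGlaw : Measure.map G P = gaussianReal 0 v) (hindep : IndepFun A G P)
    (c : ℝ) (hint : Integrable (fun ω => Real.exp (c^2 * v / 2 * A ω)) P) :
    Integrable (fun ω => Real.exp (c * Real.sqrt (A ω) * G ω)) P ∧
      ∫ ω, Real.exp (c * Real.sqrt (A ω) * G ω) ∂P
        = ∫ ω, Real.exp (c^2 * v / 2 * A ω) ∂P := by
  have hmap : Measure.map (fun ω => (A ω, G ω)) P
      = (Measure.map A P).prod (gaussianReal 0 v) := by
    rw [← hGlaw]
    exact (indepFun_iff_map_prod_eq_prod_map_map hAmeas.aemeasurable hGmeas.aemeasurable).1 hindep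
  haveI : IsProbabilityMeasure (Measure.map A P) :=
    Measure.isProbabilityMeasure_map hAmeas.aemeasurable
  have hApos : ∀ᵐ a ∂(Measure.map A P), 0 < a := by
    have hset : {a : ℝ | ¬ 0 < a} = Set.Iic 0 := by ext a; simp
    rw [ae_iff, hset, Measure.map_apply hAmeas measurableSet_Iic]
    have hpre : A ⁻¹' Set.Iic 0 = ∅ := by
      ext ω
      simp only [Set.mem_preimage, Set.mem_Iic, Set.mem_empty_iff_false, iff_false, not_le]
      exact hA ω
    rw [hpre, measure_empty]
  set F : ℝ × ℝ → ℝ≥0∞ := fun q => ENNReal.ofReal (Real.exp (c * Real.sqrt q.1 * q.2))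
    with hF_def
  have hFmeas : Measurable F := by
    rw [hF_def]
    fun_prop
  have hmeas_lhs : Measurable fun ω => Real.exp (c * Real.sqrt (A ω) * G ω) := by fun_prop
  have hlhs : ∫⁻ ω, ENNReal.ofReal (Real.exp (c * Real.sqrt (A ω) * G ω)) ∂P
      = ∫⁻ a, ∫⁻ x, ENNReal.ofReal (Real.exp (c * Real.sqrt a * x)) ∂(gaussianReal 0 v)
          ∂(Measure.map A P) := by
    have h1 : ∫⁻ ω, ENNReal.ofReal (Real.exp (c * Real.sqrt (A ω) * G ω)) ∂P
        = ∫⁻ q, F q ∂((Measure.map A P).prod (gaussianReal 0 v)) := by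
      rw [← hmap, lintegral_map hFmeas (hAmeas.prodMk hGmeas)]
    rw [h1, MeasureTheory.lintegral_prod _ hFmeas.aemeasurable]
  have hinner : ∀ a : ℝ,
      ∫⁻ x, ENNReal.ofReal (Real.exp (c * Real.sqrt a * x)) ∂(gaussianReal 0 v)
        = ENNReal.ofReal (Real.exp ((c * Real.sqrt a)^2 * v / 2)) := by
    intro a
    rw [← ofReal_integral_eq_lintegral_ofReal (gaussian_mgf_integrable v (c * Real.sqrt a))
      (ae_of_all _ fun x => (Real.exp_pos _).le), gaussian_mgf_eq]
  have hrhs_ae : ∀ᵐ a ∂(Measure.map A P),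
      ENNReal.ofReal (Real.exp ((c * Real.sqrt a)^2 * v / 2))
        = ENNReal.ofReal (Real.exp (c^2 * v / 2 * a)) := by
    refine hApos.mono fun a ha => ?_
    rw [mul_pow, Real.sq_sqrt ha.le]
    congr 2
    ring
  have hmeas_rhs : Measurable fun ω => Real.exp (c^2 * v / 2 * A ω) :=
    Real.measurable_exp.comp (measurable_const.mul hAmeas)
  have hfin : ∫⁻ ω, ENNReal.ofReal (Real.exp (c^2 * v / 2 * A ω)) ∂P
      = ENNReal.ofReal (∫ ω, Real.exp (c^2 * v / 2 * A ω) ∂P) :=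
    (ofReal_integral_eq_lintegral_ofReal hint
      (ae_of_all _ fun ω => (Real.exp_pos _).le)).symm
  have hmain : ∫⁻ ω, ENNReal.ofReal (Real.exp (c * Real.sqrt (A ω) * G ω)) ∂P
      = ENNReal.ofReal (∫ ω, Real.exp (c^2 * v / 2 * A ω) ∂P) := by
    rw [hlhs]
    calc ∫⁻ a, ∫⁻ x, ENNReal.ofReal (Real.exp (c * Real.sqrt a * x)) ∂(gaussianReal 0 v)
          ∂(Measure.map A P)
        = ∫⁻ a, ENNReal.ofReal (Real.exp ((c * Real.sqrt a)^2 * v / 2)) ∂(Measure.map A P) :=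
          lintegral_congr fun a => hinner a
      _ = ∫⁻ a, ENNReal.ofReal (Real.exp (c^2 * v / 2 * a)) ∂(Measure.map A P) :=
          lintegral_congr_ae hrhs_ae
      _ = ∫⁻ ω, ENNReal.ofReal (Real.exp (c^2 * v / 2 * A ω)) ∂P := by
          have hmE : Measurable fun a : ℝ => ENNReal.ofReal (Real.exp (c^2 * v / 2 * a)) := by
            fun_prop
          rw [lintegral_map hmE hAmeas]
      _ = ENNReal.ofReal (∫ ω, Real.exp (c^2 * v / 2 * A ω) ∂P) := hfin
  exact integrable_and_integral_eq_of_lintegral hmeas_lhs (fun ω => (Real.exp_pos _).le)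
    (integral_nonneg fun ω => (Real.exp_pos _).le) hmain

/-- Squared `L²`-norm of the Wick-`A` exponential
`W_A(η) = e^{√A I(η)} / E[e^{√A I(η)}]`, where `G = I(η)` is centered Gaussian with
variance `v = ‖η‖²₂` independent of `A`, and `L` is the holomorphic extension of the
Laplace transform of `A`. -/
theorem statement6 {Ω : Type*} [MeasurableSpace Ω] (P : Measure Ω) [IsProbabilityMeasure P]
    (A G : Ω → ℝ) (hA : ∀ ω, 0 < A ω) (hAmeas : Measurable A) (hGmeas : Measurable G)
    (v : NNReal) (hGlaw : Measure.map G P = gaussianReal 0 v)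
    (hindep : IndepFun A G P)
    (R : ℝ) (hR : 0 < R) (L : ℂ → ℂ)
    (hL : DifferentiableOn ℂ L (Metric.ball (0:ℂ) R))
    (hLlaplace : ∀ t : ℝ, 0 ≤ t → t < R → L t = ∫ ω, Complex.exp (-(t * A ω)) ∂P)
    (hv : 2 * (v : ℝ) < R) :
    ((∫ ω, (Real.exp (Real.sqrt (A ω) * G ω) /
        (∫ ω', Real.exp (Real.sqrt (A ω') * G ω') ∂P)) ^ 2 ∂P : ℝ) : ℂ) =
      L (-(2 * (v : ℝ))) * (L (-((v : ℝ) / 2)))⁻¹ ^ 2 := by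
  have hv0 : (0:ℝ) ≤ v := v.coe_nonneg
  obtain ⟨hint1, hL1⟩ := laplace_extension P A hA hAmeas R L hL hLlaplace ((v:ℝ)/2)
    (by positivity) (by linarith)
  obtain ⟨hint2, hL2⟩ := laplace_extension P A hA hAmeas R L hL hLlaplace (2*(v:ℝ))
    (by positivity) hv
  -- c = 1 case
  have he1 : ∀ ω, (1:ℝ)^2 * v / 2 * A ω = (v:ℝ)/2 * A ω := fun ω => by ring
  obtain ⟨g1int, g1⟩ := exp_sqrt_integral P A G hA hAmeas hGmeas v hGlaw hindep 1
    (hint1.congr (ae_of_all _ fun ω => by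
      show Real.exp ((v:ℝ)/2 * A ω) = Real.exp ((1:ℝ)^2 * v / 2 * A ω)
      rw [he1 ω]))
  -- c = 2 case
  have he2 : ∀ ω, (2:ℝ)^2 * v / 2 * A ω = 2*(v:ℝ) * A ω := fun ω => by ring
  obtain ⟨g2int, g2⟩ := exp_sqrt_integral P A G hA hAmeas hGmeas v hGlaw hindep 2
    (hint2.congr (ae_of_all _ fun ω => by
      show Real.exp (2*(v:ℝ) * A ω) = Real.exp ((2:ℝ)^2 * v / 2 * A ω)
      rw [he2 ω]))
  set E1 : ℝ := ∫ ω', Real.exp (Real.sqrt (A ω') * G ω') ∂P with hE1_def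
  set E2 : ℝ := ∫ ω, Real.exp (2*(v:ℝ) * A ω) ∂P with hE2_def
  have hE1 : E1 = ∫ ω, Real.exp ((v:ℝ)/2 * A ω) ∂P := by
    rw [hE1_def]
    calc ∫ ω', Real.exp (Real.sqrt (A ω') * G ω') ∂P
        = ∫ ω, Real.exp (1 * Real.sqrt (A ω) * G ω) ∂P := by
          refine integral_congr_ae (ae_of_all _ fun ω => ?_)
          show Real.exp (Real.sqrt (A ω) * G ω) = Real.exp (1 * Real.sqrt (A ω) * G ω)
          rw [one_mul]
      _ = ∫ ω, Real.exp ((1:ℝ)^2 * v / 2 * A ω) ∂P := g1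
      _ = ∫ ω, Real.exp ((v:ℝ)/2 * A ω) ∂P :=
          integral_congr_ae (ae_of_all _ fun ω => by
            show Real.exp ((1:ℝ)^2 * v / 2 * A ω) = Real.exp ((v:ℝ)/2 * A ω)
            rw [he1 ω])
  have hE1pos : 0 < E1 := by
    rw [hE1]
    calc (0:ℝ) < 1 := one_pos
      _ = ∫ _ω, (1:ℝ) ∂P := by simp
      _ ≤ ∫ ω, Real.exp ((v:ℝ)/2 * A ω) ∂P := by
          refine integral_mono (integrable_const 1) hint1 (fun ω => ?_)
          exact Real.one_le_exp (mul_nonneg (by positivity) (hA ω).le)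
  have hg2' : ∫ ω, Real.exp (2 * Real.sqrt (A ω) * G ω) ∂P = E2 := by
    rw [g2, hE2_def]
    exact integral_congr_ae (ae_of_all _ fun ω => by
      show Real.exp ((2:ℝ)^2 * v / 2 * A ω) = Real.exp (2*(v:ℝ) * A ω)
      rw [he2 ω])
  have hLHS : ∫ ω, (Real.exp (Real.sqrt (A ω) * G ω) / E1) ^ 2 ∂P = E2 / E1^2 := by
    have hpw : ∀ ω, (Real.exp (Real.sqrt (A ω) * G ω) / E1) ^ 2
        = Real.exp (2 * Real.sqrt (A ω) * G ω) * (E1^2)⁻¹ := by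
      intro ω
      rw [div_pow, div_eq_mul_inv]
      congr 2
      rw [sq, ← Real.exp_add]
      congr 1
      ring
    rw [integral_congr_ae (ae_of_all _ fun ω => hpw ω), integral_mul_const, hg2',
      div_eq_mul_inv]
  have hc1 : (-(2 * ((v:ℝ):ℂ))) = ((-(2*(v:ℝ)) : ℝ) : ℂ) := by push_cast; ring
  have hc2 : (-(((v:ℝ):ℂ)/2)) = ((-((v:ℝ)/2) : ℝ) : ℂ) := by push_cast; ring
  rw [hLHS, hc1, hc2, hL2, hL1, ← hE1]
  push_cast
  rw [div_eq_mul_inv, inv_pow]
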